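/- There exists an absolute constant c > 0 such that: for all η > 0 and ε > 0 there exists T₀ > 0 (depending only on ε) such that for every T ≥ T₀, every A ∈ SL(2,ℝ) with ‖A − I‖∞ ≤ T^{-(2η+ε)}, and every t ∈ [0, T^η], there exist real numbers t', y', θ' with |t'| ≤ cT^{-ε}, |y'| ≤ cT^{-ε}, |θ'| ≤ cT^{-ε} and n(-t)·A·n(t) = n(t')·a(y')·K(θ'). (Slow divergence of the horocycle flow: if two points of SL(2,ℝ) are within T^{-(2η+ε)} of each other, their images under the time-t horocycle flow stay within O(T^{-ε}) of each other for all 0 ≤ t ≤ T^η.) -/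

import Mathlib

open Real Matrix

/-- `n t = [[1, t], [0, 1]]`. -/
noncomputable def n (t : ℝ) : Matrix (Fin 2) (Fin 2) ℝ := !![1, t; 0, 1]

/-- `a y = [[e^{y/2}, 0], [0, e^{-y/2}]]`. -/
noncomputable def a (y : ℝ) : Matrix (Fin 2) (Fin 2) ℝ :=
  !![Real.exp (y / 2), 0; 0, Real.exp (-y / 2)]

/-- `K θ = [[cos θ, sin θ], [-sin θ, cos θ]]`. -/
noncomputable def K (θ : ℝ) : Matrix (Fin 2) (Fin 2) ℝ :=
  !![Real.cos θ, Real.sin θ; -Real.sin θ, Real.cos θ]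

/-- The maximum of the absolute values of the entries of a real 2×2 matrix. -/
noncomputable def mnorm (M : Matrix (Fin 2) (Fin 2) ℝ) : ℝ :=
  max (max |M 0 0| |M 0 1|) (max |M 1 0| |M 1 1|)

lemma hlp1 (p q r s δ : ℝ) (hδ0 : 0 ≤ δ) (hδ : δ ≤ 1/10)
    (hp : |p - 1| ≤ δ) (hq : |q| ≤ δ) (hr : |r| ≤ δ) (hs : |s - 1| ≤ δ) :
    |p*r + q*s| ≤ 3*δ := by
  rw [abs_le] at *
  constructor <;> nlinarith

lemma hlp_log (u δ : ℝ) (hδ0 : 0 ≤ δ) (hu1 : |u - 1| ≤ (23:ℝ)/10 * δ)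
    (hul : (81:ℝ)/100 ≤ u) : |Real.log u| ≤ 25 * δ := by
  rw [abs_le] at hu1
  have huu : (0:ℝ) < u := by linarith
  rcases le_or_gt 1 u with h | h
  · rw [abs_of_nonneg (Real.log_nonneg h)]
    have := Real.log_le_sub_one_of_pos huu
    linarith
  · have hlog : Real.log u ≤ 0 := Real.log_nonpos (by linarith) h.le
    rw [abs_of_nonpos hlog]
    have h2 := Real.log_le_sub_one_of_pos (inv_pos.mpr huu)
    rw [Real.log_inv] at h2
    have h3 : u⁻¹ - 1 ≤ 25 * δ := by
      rw [sub_le_iff_le_add, inv_le_iff_one_le_mul₀ huu]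
      nlinarith
    linarith

lemma hlp_arcsin (x : ℝ) (hx : |x| ≤ 1) : |Real.arcsin x| ≤ 2 * |x| := by
  obtain ⟨h1, h2⟩ := abs_le.mp hx
  have hsin : Real.sin (Real.arcsin x) = x := Real.sin_arcsin h1 h2
  have habs : |Real.arcsin x| ≤ π/2 :=
    abs_le.mpr ⟨Real.neg_pi_div_two_le_arcsin x, Real.arcsin_le_pi_div_two x⟩
  have hsa : Real.sin |Real.arcsin x| = |x| := by
    rcases le_or_gt 0 (Real.arcsin x) with h | h
    · rw [abs_of_nonneg h, hsin, abs_of_nonneg (Real.arcsin_nonneg.mp h)]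
    · rw [abs_of_neg h, Real.sin_neg, hsin, abs_of_neg]
      by_contra hc
      push_neg at hc
      exact absurd (Real.arcsin_nonneg.mpr hc) (not_le.mpr h)
  have hms := Real.mul_le_sin (abs_nonneg (Real.arcsin x)) habs
  rw [hsa, div_mul_eq_mul_div, div_le_iff₀ Real.pi_pos] at hms
  nlinarith [Real.pi_le_four, abs_nonneg x, abs_nonneg (Real.arcsin x)]

lemma sq_cancel {x y : ℝ} (hx : 0 < x) (hy : 0 < y) (h : x^2 = y^2) : x = y := by
  have h1 : (x - y) * (x + y) = 0 := by linear_combination h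
  rcases mul_eq_zero.mp h1 with h2 | h2
  · linarith
  · linarith

set_option maxHeartbeats 1000000 in
lemma iwasawa_aux (p q r s δ : ℝ) (hdet : p * s - q * r = 1)
    (hδ0 : 0 ≤ δ) (hδ : δ ≤ 1/10)
    (hp : |p - 1| ≤ δ) (hq : |q| ≤ δ) (hr : |r| ≤ δ) (hs : |s - 1| ≤ δ) :
    ∃ t' y' θ' : ℝ, |t'| ≤ 25 * δ ∧ |y'| ≤ 25 * δ ∧ |θ'| ≤ 25 * δ ∧
      !![p, q; r, s] = n t' * a y' * K θ' := by
  obtain ⟨hp1, hp2⟩ := abs_le.mp hp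
  obtain ⟨hq1, hq2⟩ := abs_le.mp hq
  obtain ⟨hr1, hr2⟩ := abs_le.mp hr
  obtain ⟨hs1, hs2⟩ := abs_le.mp hs
  set u : ℝ := r^2 + s^2 with hu_def
  have hu0 : (81:ℝ)/100 ≤ u := by nlinarith
  have huu : (0:ℝ) < u := by linarith
  have hu1 : |u - 1| ≤ (23:ℝ)/10 * δ := by
    rw [abs_le]
    constructor <;> nlinarith
  clear_value u
  obtain ⟨w, hw0, hw2⟩ : ∃ w : ℝ, 0 < w ∧ w^2 = u :=
    ⟨Real.sqrt u, Real.sqrt_pos.mpr huu, Real.sq_sqrt huu.le⟩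
  have hw9 : (9:ℝ)/10 ≤ w := by nlinarith
  refine ⟨(p*r + q*s)/u, -Real.log u, Real.arcsin (-r/w), ?_, ?_, ?_, ?_⟩
  · rw [abs_div, abs_of_pos huu, div_le_iff₀ huu]
    have h3 := hlp1 p q r s δ hδ0 hδ hp hq hr hs
    nlinarith
  · rw [abs_neg]; exact hlp_log u δ hδ0 hu1 hu0
  · have hxd : |(-r/w)| ≤ (10:ℝ)/9 * δ := by
      rw [abs_div, abs_of_pos hw0, div_le_iff₀ hw0, abs_neg, abs_le]
      constructor <;> nlinarith
    have h4 := hlp_arcsin (-r/w) (by linarith)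
    linarith
  · have hea : Real.exp (-Real.log u / 2) = 1 / w := by
      apply sq_cancel (Real.exp_pos _) (by positivity)
      rw [sq, ← Real.exp_add, show -Real.log u / 2 + -Real.log u / 2 = -Real.log u by ring,
        Real.exp_neg, Real.exp_log huu, div_pow, one_pow, hw2, one_div]
    have heb : Real.exp (Real.log u / 2) = w := by
      apply sq_cancel (Real.exp_pos _) hw0
      rw [sq, ← Real.exp_add, show Real.log u / 2 + Real.log u / 2 = Real.log u by ring,
        Real.exp_log huu, hw2]
    have hsin : Real.sin (Real.arcsin (-r/w)) = -r/w := by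
      have hb1 : -1 ≤ -r/w := by rw [le_div_iff₀ hw0]; linarith
      have hb2 : -r/w ≤ 1 := by rw [div_le_iff₀ hw0]; linarith
      exact Real.sin_arcsin hb1 hb2
    have hcos : Real.cos (Real.arcsin (-r/w)) = s/w := by
      rw [Real.cos_arcsin]
      have he : 1 - (-r/w)^2 = (s/w)^2 := by
        field_simp
        linear_combination hw2 + hu_def
      rw [he, Real.sqrt_sq (div_nonneg (by linarith) hw0.le)]
    clear hp hq hr hs hu1 hp1 hp2 hq1 hq2 hr1 hr2 hs1 hs2 hδ hδ0 hw9 hu0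
    ext i j
    fin_cases i <;> fin_cases j <;>
      simp [n, a, K, Matrix.mul_apply, Fin.sum_univ_succ, hea, heb, hsin, hcos]
    · field_simp
      linear_combination p*w^2 * hu_def + w^2*s*hdet + s*hw2
    · field_simp
      linear_combination q*w^2 * hu_def - w^2*r*hdet - r*hw2
    · field_simp
    · field_simp

set_option maxHeartbeats 1000000 in
/-- Slow divergence of the horocycle flow. -/
theorem stmt1 :
    ∃ c > (0 : ℝ), ∀ η : ℝ, 0 < η → ∀ ε : ℝ, 0 < ε →
      ∃ T₀ > (0 : ℝ), ∀ T : ℝ, T₀ ≤ T →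
        ∀ A : Matrix (Fin 2) (Fin 2) ℝ, A.det = 1 →
          mnorm (A - 1) ≤ T ^ (-(2 * η + ε)) →
            ∀ t : ℝ, 0 ≤ t → t ≤ T ^ η →
              ∃ t' y' θ' : ℝ, |t'| ≤ c * T ^ (-ε) ∧ |y'| ≤ c * T ^ (-ε) ∧
                |θ'| ≤ c * T ^ (-ε) ∧
                n (-t) * A * n t = n t' * a y' * K θ' := by
  refine ⟨100, by norm_num, fun η hη ε hε => ⟨(40:ℝ) ^ (1/ε), Real.rpow_pos_of_pos (by norm_num) _, ?_⟩⟩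
  intro T hT A hdetA hA t ht0 ht1
  have hT1 : (1:ℝ) < T := by
    have : (1:ℝ) < (40:ℝ) ^ (1/ε) :=
      (Real.one_lt_rpow_iff_of_pos (by norm_num)).mpr (Or.inl ⟨by norm_num, by positivity⟩)
    linarith
  have hT0 : (0:ℝ) < T := by linarith
  -- T ^ (-ε) ≤ 1/40
  have hTe : T ^ (-ε) ≤ 1/40 := by
    have h1 : T ^ (-ε) ≤ ((40:ℝ) ^ (1/ε)) ^ (-ε) :=
      Real.rpow_le_rpow_of_nonpos (Real.rpow_pos_of_pos (by norm_num) _) hT (by linarith)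
    have h2 : ((40:ℝ) ^ (1/ε)) ^ (-ε) = (40:ℝ)⁻¹ := by
      rw [← Real.rpow_mul (by norm_num), show 1/ε * (-ε) = -1 by field_simp,
        Real.rpow_neg_one]
    rw [h2] at h1
    linarith
  set D : ℝ := T ^ (-(2*η+ε)) with hD_def
  have hDpos : 0 < D := Real.rpow_pos_of_pos hT0 _
  have hTη : 1 ≤ T ^ η := Real.one_le_rpow hT1.le hη.le
  -- entry bounds of A
  have e00 : (A - 1) 0 0 = A 0 0 - 1 := by simp [Matrix.sub_apply, Matrix.one_apply]
  have e01 : (A - 1) 0 1 = A 0 1 := by simp [Matrix.sub_apply, Matrix.one_apply]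
  have e10 : (A - 1) 1 0 = A 1 0 := by simp [Matrix.sub_apply, Matrix.one_apply]
  have e11 : (A - 1) 1 1 = A 1 1 - 1 := by simp [Matrix.sub_apply, Matrix.one_apply]
  have h00 : |A 0 0 - 1| ≤ D := by
    rw [← e00]; exact ((le_max_left _ _).trans (le_max_left _ _)).trans hA
  have h01 : |A 0 1| ≤ D := by
    rw [← e01]; exact ((le_max_right _ _).trans (le_max_left _ _)).trans hA
  have h10 : |A 1 0| ≤ D := by
    rw [← e10]; exact ((le_max_left _ _).trans (le_max_right _ _)).trans hA
  have h11 : |A 1 1 - 1| ≤ D := by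
    rw [← e11]; exact ((le_max_right _ _).trans (le_max_right _ _)).trans hA
  obtain ⟨h00a, h00b⟩ := abs_le.mp h00
  obtain ⟨h01a, h01b⟩ := abs_le.mp h01
  obtain ⟨h10a, h10b⟩ := abs_le.mp h10
  obtain ⟨h11a, h11b⟩ := abs_le.mp h11
  -- the conjugated matrix
  have hB : n (-t) * A * n t =
      !![A 0 0 - t * A 1 0, t * A 0 0 - t^2 * A 1 0 + A 0 1 - t * A 1 1;
         A 1 0, t * A 1 0 + A 1 1] := by
    ext i j
    fin_cases i <;> fin_cases j <;>
      simp [n, Matrix.mul_apply, Matrix.vecMul, dotProduct, Fin.sum_univ_succ] <;> ring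
  have hdet2 : A 0 0 * A 1 1 - A 0 1 * A 1 0 = 1 := by
    have := Matrix.det_fin_two A
    rw [hdetA] at this
    linarith
  -- key comparison
  have hmain : D * (1 + T^η)^2 ≤ 4 * T ^ (-ε) := by
    have h1 : (1 + T^η)^2 ≤ 4 * (T^η)^2 := by nlinarith
    have h2 : D * (T^η)^2 = T ^ (-ε) := by
      rw [hD_def, sq, ← Real.rpow_add hT0, ← Real.rpow_add hT0]
      congr 1
      ring
    nlinarith
  have hchain : D * (1 + t)^2 ≤ 4 * T ^ (-ε) := by
    have hp1 : (0:ℝ) ≤ D * ((T^η - t) * (2 + T^η + t)) :=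
      mul_nonneg hDpos.le (mul_nonneg (by linarith) (by positivity))
    nlinarith
  -- per-entry bounds on B
  have hint1 : (0:ℝ) ≤ t * (D - (A 0 0 - 1)) := mul_nonneg ht0 (by linarith)
  have hint2 : (0:ℝ) ≤ t * ((A 0 0 - 1) + D) := mul_nonneg ht0 (by linarith)
  have hint3 : (0:ℝ) ≤ t^2 * (D - A 1 0) := mul_nonneg (sq_nonneg t) (by linarith)
  have hint4 : (0:ℝ) ≤ t^2 * (A 1 0 + D) := mul_nonneg (sq_nonneg t) (by linarith)
  have hint5 : (0:ℝ) ≤ t * (D - (A 1 1 - 1)) := mul_nonneg ht0 (by linarith)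
  have hint6 : (0:ℝ) ≤ t * ((A 1 1 - 1) + D) := mul_nonneg ht0 (by linarith)
  have hint7 : (0:ℝ) ≤ t * (D - A 1 0) := mul_nonneg ht0 (by linarith)
  have hint8 : (0:ℝ) ≤ t * (A 1 0 + D) := mul_nonneg ht0 (by linarith)
  have hDt : (0:ℝ) ≤ D * t := mul_nonneg hDpos.le ht0
  have hDt2 : (0:ℝ) ≤ D * t^2 := mul_nonneg hDpos.le (sq_nonneg t)
  have bp : |(A 0 0 - t * A 1 0) - 1| ≤ 4 * T ^ (-ε) := by
    rw [abs_le]; constructor <;> linarith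
  have bq : |t * A 0 0 - t^2 * A 1 0 + A 0 1 - t * A 1 1| ≤ 4 * T ^ (-ε) := by
    rw [abs_le]; constructor <;> linarith
  have br : |A 1 0| ≤ 4 * T ^ (-ε) := by
    rw [abs_le]; constructor <;> linarith
  have bs : |(t * A 1 0 + A 1 1) - 1| ≤ 4 * T ^ (-ε) := by
    rw [abs_le]; constructor <;> linarith
  have bdet : (A 0 0 - t * A 1 0) * (t * A 1 0 + A 1 1) -
      (t * A 0 0 - t^2 * A 1 0 + A 0 1 - t * A 1 1) * A 1 0 = 1 := by
    linear_combination hdet2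
  obtain ⟨t', y', θ', ht', hy', hθ', heq⟩ :=
    iwasawa_aux (A 0 0 - t * A 1 0) (t * A 0 0 - t^2 * A 1 0 + A 0 1 - t * A 1 1)
      (A 1 0) (t * A 1 0 + A 1 1) (4 * T ^ (-ε)) bdet (by positivity)
      (by linarith) bp bq br bs
  exact ⟨t', y', θ', by linarith, by linarith, by linarith, by rw [hB, heq]⟩
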